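/- Let L be a Lie algebra and K a subalgebra of L generated by r elements h₁,…,h_r such that every Lie commutator in the h_i is ad-nilpotent in L of index at most t. If K is nilpotent of class c, then there is a number u bounded in terms of c, r, t such that [L, K, K, …, K] = 0 with u copies of K. -/

import Mathlib

/-- Lie commutators (iterated Lie brackets) in the elements of a set `X`. -/
inductive IsLieWord {L : Type v} [LieRing L] (X : Set L) : L → Prop
  | base {x : L} : x ∈ X → IsLieWord X x
  | bracket {x y : L} : IsLieWord X x → IsLieWord X y → IsLieWord X ⁅x, y⁆

namespace KS

-- === from p1 ===
inductive Tr (r : ℕ) : Type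
  | leaf : Fin r → Tr r
  | node : Tr r → Tr r → Tr r
deriving DecidableEq

def wt {r : ℕ} : Tr r → ℕ
  | .leaf _ => 1
  | .node a b => wt a + wt b

lemma one_le_wt {r : ℕ} (w : Tr r) : 1 ≤ wt w := by
  induction w with
  | leaf i => simp [wt]
  | node a b ha hb => simp [wt]; omega

def allW (r : ℕ) : ℕ → List (Tr r)
  | 0 => []
  | n+1 => ((List.finRange r).map Tr.leaf) ++
      (((allW r n).product (allW r n)).map (fun p => Tr.node p.1 p.2))

lemma mem_allW {r : ℕ} : ∀ (n : ℕ) (w : Tr r), wt w ≤ n → w ∈ allW r n := by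
  intro n
  induction n with
  | zero => intro w hw; have := one_le_wt w; omega
  | succ n ih =>
    intro w hw
    cases w with
    | leaf i => simp [allW]
    | node a b =>
      have ha := one_le_wt a
      have hb := one_le_wt b
      have hw' : wt a + wt b ≤ n + 1 := hw
      simp only [allW, List.mem_append, List.mem_map, List.pair_mem_product]
      right
      exact ⟨(a, b), List.pair_mem_product.mpr ⟨ih a (by omega), ih b (by omega)⟩, rfl⟩

-- === from p2 ===
section Fold
variable {k : Type*} {L : Type*} [Field k] [LieRing L] [LieAlgebra k L]

def fold (l : List L) (x : L) : L := l.foldl (fun acc y => ⁅acc, y⁆) x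

@[simp] lemma fold_nil (x : L) : fold ([] : List L) x = x := rfl

@[simp] lemma fold_cons (y : L) (l : List L) (x : L) :
    fold (y :: l) x = fold l ⁅x, y⁆ := rfl

lemma fold_append (l₁ l₂ : List L) (x : L) :
    fold (l₁ ++ l₂) x = fold l₂ (fold l₁ x) := List.foldl_append ..

@[simp] lemma fold_zero (l : List L) : fold l (0 : L) = 0 := by
  induction l with
  | nil => rfl
  | cons y l ih => simp [ih]

lemma fold_add (l : List L) (x y : L) : fold l (x + y) = fold l x + fold l y := by
  induction l generalizing x y with
  | nil => rfl
  | cons z l ih => simp [add_lie, ih]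

lemma fold_smul (l : List L) (a : k) (x : L) : fold l (a • x) = a • fold l x := by
  induction l generalizing x with
  | nil => rfl
  | cons z l ih => simp [smul_lie, ih]

lemma fold_replicate (a : L) (n : ℕ) (x : L) :
    fold (List.replicate n a) x = ((-(LieAlgebra.ad k L a)) ^ n) x := by
  induction n generalizing x with
  | zero => simp [fold]
  | succ n ih =>
    rw [List.replicate_succ, fold_cons, ih, pow_succ, Module.End.mul_apply]
    congr 1
    rw [LinearMap.neg_apply, LieAlgebra.ad_apply, lie_skew]

lemma fold_replicate_eq_zero (a : L) (t : ℕ)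
    (ha : ∀ z : L, ((LieAlgebra.ad k L a) ^ t) z = 0) (x : L) :
    fold (List.replicate t a) x = 0 := by
  rw [fold_replicate (k := k), neg_pow]
  have : ((LieAlgebra.ad k L a) ^ t) x = 0 := ha x
  rw [Module.End.mul_apply, this, map_zero]

lemma fold_eq_zero_of_zero_mem (l : List L) (h : (0 : L) ∈ l) (x : L) : fold l x = 0 := by
  induction l generalizing x with
  | nil => simp at h
  | cons y l ih =>
    rcases List.mem_cons.mp h with h | h
    · rw [fold_cons, ← h, lie_zero, fold_zero]
    · exact ih h _

lemma jacobi (y A B : L) : ⁅⁅y, A⁆, B⁆ = ⁅⁅y, B⁆, A⁆ + ⁅y, ⁅A, B⁆⁆ := by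
  rw [lie_lie, ← lie_skew A ⁅y, B⁆, sub_neg_eq_add, add_comm]

end Fold

-- === from p3 ===
lemma exists_desc {α : Type*} (R : α → α → Prop) :
    ∀ l : List α, ¬ l.Chain' R → ∃ l₁ a b l₂, l = l₁ ++ a :: b :: l₂ ∧ ¬ R a b := by
  intro l
  induction l with
  | nil => intro h; exact absurd List.isChain_nil h
  | cons x l ih =>
    cases l with
    | nil => intro h; exact absurd (List.isChain_singleton x) h
    | cons y l' =>
      intro h
      rw [List.Chain', List.isChain_cons_cons] at h
      by_cases hxy : R x y
      · have h' : ¬ (y :: l').Chain' R := fun hc => h ⟨hxy, hc⟩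
        obtain ⟨l₁, a, b, l₂, hdec, hR⟩ := ih h'
        exact ⟨x :: l₁, a, b, l₂, by rw [List.cons_append, hdec], hR⟩
      · exact ⟨[], x, y, l', rfl, hxy⟩

lemma dropWhile_head_false {α : Type*} (p : α → Bool) :
    ∀ (l : List α) {a : α} {rest : List α}, l.dropWhile p = a :: rest → p a = false := by
  intro l
  induction l with
  | nil => intro a rest h; simp [List.dropWhile] at h
  | cons x l ih =>
    intro a rest h
    by_cases hx : p x
    · rw [List.dropWhile_cons_of_pos hx] at h; exact ih h
    · rw [List.dropWhile_cons_of_neg hx] at h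
      obtain ⟨rfl, -⟩ : x = a ∧ l = rest := by injection h with h1 h2; exact ⟨h1, h2⟩
      simpa using hx

section Nu
variable {α : Type*} (d : α → ℕ) (M : ℕ)

def nuF (n : ℕ) (l : List α) : ℕ := l.foldl (fun n w => n * M + d w) n

def nu (l : List α) : ℕ := nuF d M 0 l

@[simp] lemma nuF_cons (n : ℕ) (w : α) (l : List α) :
    nuF d M n (w :: l) = nuF d M (n * M + d w) l := rfl

lemma nuF_mono (hM : 1 ≤ M) : ∀ (l : List α) {n₁ n₂ : ℕ}, n₁ < n₂ →
    nuF d M n₁ l < nuF d M n₂ l := by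
  intro l
  induction l with
  | nil => intro n₁ n₂ h; exact h
  | cons w l ih =>
    intro n₁ n₂ h
    rw [nuF_cons, nuF_cons]
    have : n₁ * M + d w < n₂ * M + d w := by
      have := Nat.mul_lt_mul_of_lt_of_le h (le_refl M) hM
      omega
    exact ih this

lemma nuF_append (n : ℕ) (l₁ l₂ : List α) :
    nuF d M n (l₁ ++ l₂) = nuF d M (nuF d M n l₁) l₂ := List.foldl_append ..

lemma nu_swap (hM : 2 ≤ M) (l₁ l₂ : List α) (a b : α) (hd : d b < d a) (hda : d a < M) :
    nu d M (l₁ ++ b :: a :: l₂) < nu d M (l₁ ++ a :: b :: l₂) := by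
  unfold nu
  rw [nuF_append, nuF_append, nuF_cons, nuF_cons, nuF_cons, nuF_cons]
  set p := nuF d M 0 l₁
  have h1 : d b * M + M ≤ d a * M := by
    calc d b * M + M = (d b + 1) * M := by ring
    _ ≤ d a * M := Nat.mul_le_mul_right M (by omega)
  have e1 : (p * M + d b) * M = p * M * M + d b * M := by ring
  have e2 : (p * M + d a) * M = p * M * M + d a * M := by ring
  exact nuF_mono d M (by omega) l₂ (by rw [e1, e2]; omega)

lemma nu_shrink (hM : 2 ≤ M) (l₁ l₂ : List α) (x a b : α) (hx : d x < M) (ha : 1 ≤ d a) :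
    nu d M (l₁ ++ x :: l₂) < nu d M (l₁ ++ a :: b :: l₂) := by
  unfold nu
  rw [nuF_append, nuF_append, nuF_cons, nuF_cons, nuF_cons]
  set p := nuF d M 0 l₁
  have h2 : p * M ≤ p * M * M := Nat.le_mul_of_pos_right _ (by omega)
  have h3 : M ≤ d a * M := by
    calc M = 1 * M := (one_mul M).symm
    _ ≤ d a * M := Nat.mul_le_mul_right M ha
  have e2 : (p * M + d a) * M = p * M * M + d a * M := by ring
  exact nuF_mono d M (by omega) l₂ (by rw [e2]; omega)

end Nu

section Repl
variable {α : Type*} [DecidableEq α] (rank : α → ℕ) (t : ℕ)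

lemma exists_replicate (ht : 1 ≤ t) :
    ∀ (n : ℕ) (l : List α) (S : Finset α), l.length ≤ n →
    l.Pairwise (fun a b => rank a ≤ rank b) →
    (∀ a ∈ l, a ∈ S) →
    (∀ a ∈ l, ∀ b ∈ l, rank a = rank b → a = b) →
    S.card * (t - 1) + 1 ≤ l.length →
    ∃ p w s, l = p ++ List.replicate t w ++ s := by
  intro n
  induction n with
  | zero =>
    intro l S hn _ _ _ hlen; omega
  | succ n ih =>
    intro l S hn hpair hmem hinj hlen
    cases l with
    | nil => simp at hlen
    | cons w l' =>
      set p1 : α → Bool := fun a => a == w with hp1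
      have hsplit : (w :: l') = (w :: l').takeWhile p1 ++ (w :: l').dropWhile p1 :=
        (List.takeWhile_append_dropWhile ..).symm
      set l₁ := (w :: l').takeWhile p1 with hl₁
      set l₂ := (w :: l').dropWhile p1 with hl₂
      have hl₁w : ∀ a ∈ l₁, a = w := by
        intro a ha
        have := List.mem_takeWhile_imp ha
        simpa [hp1] using this
      have hl₁repl : l₁ = List.replicate l₁.length w :=
        List.eq_replicate_iff.mpr ⟨rfl, hl₁w⟩
      have hl₁cons : l₁ = w :: l'.takeWhile p1 := by
        rw [hl₁, List.takeWhile_cons_of_pos (by simp [hp1])]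
      have hk : 1 ≤ l₁.length := by rw [hl₁cons]; simp
      by_cases hkt : t ≤ l₁.length
      · refine ⟨[], w, List.replicate (l₁.length - t) w ++ l₂, ?_⟩
        have ht' : t + (l₁.length - t) = l₁.length := by omega
        rw [List.nil_append, ← List.append_assoc, ← List.replicate_add, ht', ← hl₁repl]
        exact hsplit
      · have hwS : w ∈ S := hmem w (List.mem_cons_self ..)
        have hS1 : 1 ≤ S.card := Finset.card_pos.mpr ⟨w, hwS⟩
        have hlenl : l₁.length + l₂.length = (w :: l').length := by
          conv_rhs => rw [hsplit]
          simp [List.length_append]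
        have hsub₂ : ∀ a ∈ l₂, a ∈ (w :: l') := by
          intro a ha; rw [hsplit]; exact List.mem_append_right _ ha
        have hpair' : (l₁ ++ l₂).Pairwise (fun a b => rank a ≤ rank b) := by
          rw [← hsplit]; exact hpair
        rw [List.pairwise_append] at hpair'
        have hwnot : w ∉ l₂ := by
          intro hw
          cases hl2c : l₂ with
          | nil => rw [hl2c] at hw; simp at hw
          | cons v₀ rest =>
            have hv₀ : ¬ (v₀ = w) := by
              have hdw : (w :: l').dropWhile p1 = v₀ :: rest := by rw [← hl₂, hl2c]
              have := dropWhile_head_false p1 (w :: l') hdw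
              simpa [hp1] using this
            have hwrest : w ∈ rest := by
              rcases List.mem_cons.mp (hl2c ▸ hw) with h | h
              · exact absurd h.symm hv₀
              · exact h
            have h1 : rank w ≤ rank v₀ := by
              refine hpair'.2.2 w ?_ v₀ ?_
              · rw [hl₁cons]; exact List.mem_cons_self ..
              · rw [hl2c]; exact List.mem_cons_self ..
            have h2 : rank v₀ ≤ rank w := by
              have := hpair'.2.1
              rw [hl2c] at this
              exact (List.pairwise_cons.mp this).1 w hwrest
            exact hv₀ (hinj v₀ (hsub₂ v₀ (by rw [hl2c]; exact List.mem_cons_self ..)) w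
              (List.mem_cons_self ..) (by omega))
        have hmem₂ : ∀ a ∈ l₂, a ∈ S.erase w := by
          intro a ha
          refine Finset.mem_erase.mpr ⟨?_, hmem a (hsub₂ a ha)⟩
          rintro rfl; exact hwnot ha
        have hcard : (S.erase w).card = S.card - 1 := Finset.card_erase_of_mem hwS
        have hkt' : l₁.length ≤ t - 1 := by omega
        have e1 : S.card * (t - 1) = (S.card - 1) * (t - 1) + (t - 1) := by
          obtain ⟨c', hc⟩ : ∃ c', S.card = c' + 1 := ⟨S.card - 1, by omega⟩
          rw [hc]
          simp [Nat.add_mul]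
        have hlen₂ : (S.erase w).card * (t - 1) + 1 ≤ l₂.length := by
          rw [hcard]; omega
        have hn₂ : l₂.length ≤ n := by
          have : (w :: l').length ≤ n + 1 := hn
          omega
        obtain ⟨p', w', s', hdec⟩ := ih l₂ (S.erase w) hn₂ hpair'.2.1 hmem₂
          (fun a ha b hb => hinj a (hsub₂ a ha) b (hsub₂ b hb)) hlen₂
        refine ⟨l₁ ++ p', w', s', ?_⟩
        rw [hsplit, hdec]; simp [List.append_assoc]

end Repl

-- === lcs bracket (p4) ===
section LCS
variable {k : Type*} {A : Type*} [CommRing k] [LieRing A] [LieAlgebra k A]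

open LieModule

lemma lcs_bracket :
    ∀ (n m : ℕ) (x y : A), x ∈ lowerCentralSeries k A A m →
      y ∈ lowerCentralSeries k A A n → ⁅x, y⁆ ∈ lowerCentralSeries k A A (m + n + 1) := by
  intro n
  induction n with
  | zero =>
    intro m x y hx _
    have : ⁅y, x⁆ ∈ ⁅(⊤ : LieIdeal k A), lowerCentralSeries k A A m⁆ :=
      LieSubmodule.lie_mem_lie (LieSubmodule.mem_top y) hx
    rw [← lowerCentralSeries_succ] at this
    have hneg := neg_mem this
    rw [lie_skew] at hneg
    simpa using hneg
  | succ n ihn =>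
    intro m x y hx hy
    rw [lowerCentralSeries_succ] at hy
    have hy' : y ∈ Submodule.span k
        {z : A | ∃ a ∈ (⊤ : LieIdeal k A), ∃ b ∈ lowerCentralSeries k A A n, ⁅a, b⁆ = z} := by
      rw [← LieSubmodule.lieIdeal_oper_eq_linear_span']
      exact hy
    refine Submodule.span_induction
      (p := fun y _ => ⁅x, y⁆ ∈ lowerCentralSeries k A A (m + (n + 1) + 1)) ?_ ?_ ?_ ?_ hy'
    · rintro z ⟨a, -, b, hb, rfl⟩
      rw [leibniz_lie]
      refine add_mem ?_ ?_
      · have hxa : ⁅x, a⁆ ∈ lowerCentralSeries k A A (m + 1) := by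
          have : ⁅a, x⁆ ∈ ⁅(⊤ : LieIdeal k A), lowerCentralSeries k A A m⁆ :=
            LieSubmodule.lie_mem_lie (LieSubmodule.mem_top a) hx
          rw [← lowerCentralSeries_succ] at this
          have hneg := neg_mem this
          rw [lie_skew] at hneg
          simpa using hneg
        have := ihn (m + 1) ⁅x, a⁆ b hxa hb
        have heq : m + 1 + n + 1 = m + (n + 1) + 1 := by omega
        rwa [heq] at this
      · have hxb : ⁅x, b⁆ ∈ lowerCentralSeries k A A (m + n + 1) := ihn m x b hx hb
        have : ⁅a, ⁅x, b⁆⁆ ∈ ⁅(⊤ : LieIdeal k A), lowerCentralSeries k A A (m + n + 1)⁆ :=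
          LieSubmodule.lie_mem_lie (LieSubmodule.mem_top a) hxb
        rw [← lowerCentralSeries_succ] at this
        have heq : m + n + 1 + 1 = m + (n + 1) + 1 := by omega
        rwa [heq] at this
    · simp
    · intro u v _ _ hu hv
      rw [lie_add]; exact add_mem hu hv
    · intro a u _ hu
      rw [lie_smul]; exact Submodule.smul_mem _ a hu

end LCS

-- === main combinatorial lemma ===
section Main
variable {k : Type*} {L : Type*} [Field k] [LieRing L] [LieAlgebra k L] {r : ℕ}

def ev (h : Fin r → L) : Tr r → L
  | .leaf i => h i
  | .node a b => ⁅ev h a, ev h b⁆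

def foldT (h : Fin r → L) (l : List (Tr r)) (x : L) : L := fold (l.map (ev h)) x

def totW {r : ℕ} (l : List (Tr r)) : ℕ := (l.map wt).sum

def dgt (r c : ℕ) (w : Tr r) : ℕ := (allW r c).idxOf w + 1

def Mnum (r c : ℕ) : ℕ := (allW r c).length + 2

lemma dgt_lt (c : ℕ) (w : Tr r) : dgt r c w < Mnum r c := by
  have := List.idxOf_le_length (a := w) (l := allW r c)
  unfold dgt Mnum; omega

lemma foldT_zero (h : Fin r → L) (l : List (Tr r)) : foldT h l (0 : L) = 0 := fold_zero _

lemma foldT_split2 (h : Fin r → L) (l₁ l₂ : List (Tr r)) (a b : Tr r) (x : L) :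
    foldT h (l₁ ++ a :: b :: l₂) x = foldT h l₂ ⁅⁅foldT h l₁ x, ev h a⁆, ev h b⁆ := by
  unfold foldT
  rw [List.map_append, fold_append]
  rfl

lemma foldT_split1 (h : Fin r → L) (l₁ l₂ : List (Tr r)) (a : Tr r) (x : L) :
    foldT h (l₁ ++ a :: l₂) x = foldT h l₂ ⁅foldT h l₁ x, ev h a⁆ := by
  unfold foldT
  rw [List.map_append, fold_append]
  rfl

lemma main_comb (c t : ℕ) (h : Fin r → L)
    (hnil : ∀ (w : Tr r) (x : L), ((LieAlgebra.ad k L (ev h w)) ^ t) x = 0)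
    (hbig : ∀ w : Tr r, c < wt w → ev h w = 0)
    (ht : 1 ≤ t) :
    ∀ (N : ℕ) (l : List (Tr r)), nu (dgt r c) (Mnum r c) l < N →
    (∀ w ∈ l, wt w ≤ c) →
    c * ((allW r c).length * (t - 1)) + 1 ≤ totW l →
    ∀ x : L, foldT h l x = 0 := by
  intro N
  induction N with
  | zero => intro l hν; omega
  | succ N ih =>
    intro l hν hwt htot x
    set m := (allW r c).length with hm
    by_cases hch : l.Chain' (fun a b => dgt r c a ≤ dgt r c b)
    · -- sorted case
      haveI : IsTrans (Tr r) (fun a b => dgt r c a ≤ dgt r c b) :=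
        ⟨fun a b c hab hbc => le_trans hab hbc⟩
      have hpw : l.Pairwise (fun a b => dgt r c a ≤ dgt r c b) :=
        List.isChain_iff_pairwise.mp hch
      have hmemW : ∀ w ∈ l, w ∈ allW r c := fun w hw => mem_allW c w (hwt w hw)
      have hmemF : ∀ w ∈ l, w ∈ (allW r c).toFinset :=
        fun w hw => List.mem_toFinset.mpr (hmemW w hw)
      have hinj : ∀ a ∈ l, ∀ b ∈ l, dgt r c a = dgt r c b → a = b := by
        intro a ha b hb hab
        have ha' := hmemW a ha
        have hb' := hmemW b hb
        exact (List.idxOf_inj ha').mp (by unfold dgt at hab; omega)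
      have htle : totW l ≤ c * l.length := by
        unfold totW
        have := List.sum_le_card_nsmul (l.map wt) c (by
          intro z hz
          obtain ⟨w, hw, rfl⟩ := List.mem_map.mp hz
          exact hwt w hw)
        simpa [smul_eq_mul, Nat.mul_comm] using this
      have hlen : (allW r c).toFinset.card * (t - 1) + 1 ≤ l.length := by
        have hc1 : (allW r c).toFinset.card ≤ m := List.toFinset_card_le _
        have h3 : m * (t - 1) < l.length := by
          by_contra hcon
          push_neg at hcon
          have := Nat.mul_le_mul_left c hcon
          omega
        have h4 : (allW r c).toFinset.card * (t - 1) ≤ m * (t - 1) :=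
          Nat.mul_le_mul_right _ hc1
        omega
      obtain ⟨p, w, s, hdec⟩ := exists_replicate (dgt r c) t ht l.length l
        (allW r c).toFinset le_rfl hpw hmemF hinj hlen
      rw [hdec]
      unfold foldT
      rw [List.map_append, List.map_append, fold_append, fold_append, List.map_replicate]
      rw [fold_replicate_eq_zero (k := k) (ev h w) t (hnil w), fold_zero]
    · -- unsorted case
      obtain ⟨l₁, a, b, l₂, hdec, hR⟩ := exists_desc _ l hch
      have hab : dgt r c b < dgt r c a := by omega
      have hmemdec : ∀ w ∈ l₁ ++ a :: b :: l₂, wt w ≤ c := by rw [← hdec]; exact hwt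
      have hwta : wt a ≤ c := hmemdec a (by simp)
      have hwtb : wt b ≤ c := hmemdec b (by simp)
      rw [hdec, foldT_split2]
      rw [jacobi]
      unfold foldT
      rw [fold_add]
      have hterm1 : fold (List.map (ev h) l₂) ⁅⁅foldT h l₁ x, ev h b⁆, ev h a⁆ = 0 := by
        have hsw : foldT h (l₁ ++ b :: a :: l₂) x =
            fold (List.map (ev h) l₂) ⁅⁅foldT h l₁ x, ev h b⁆, ev h a⁆ := by
          rw [foldT_split2]; rfl
        rw [← hsw]
        refine ih (l₁ ++ b :: a :: l₂) ?_ ?_ ?_ x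
        · have := nu_swap (dgt r c) (Mnum r c) (by unfold Mnum; omega) l₁ l₂ a b hab
            (dgt_lt c a)
          rw [hdec] at hν
          omega
        · intro w hw
          apply hmemdec
          simp only [List.mem_append, List.mem_cons] at hw ⊢
          tauto
        · have : totW (l₁ ++ b :: a :: l₂) = totW (l₁ ++ a :: b :: l₂) := by
            unfold totW
            simp [List.map_append, List.sum_append]
            omega
          rw [this, ← hdec]
          exact htot
      have hterm2 : fold (List.map (ev h) l₂) ⁅foldT h l₁ x, ⁅ev h a, ev h b⁆⁆ = 0 := by
        have hev : ⁅ev h a, ev h b⁆ = ev h (Tr.node a b) := rfl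
        rw [hev]
        by_cases hwn : wt (Tr.node a b) ≤ c
        · have hsh : foldT h (l₁ ++ Tr.node a b :: l₂) x =
              fold (List.map (ev h) l₂) ⁅foldT h l₁ x, ev h (Tr.node a b)⁆ := by
            rw [foldT_split1]; rfl
          rw [← hsh]
          refine ih (l₁ ++ Tr.node a b :: l₂) ?_ ?_ ?_ x
          · have := nu_shrink (dgt r c) (Mnum r c) (by unfold Mnum; omega) l₁ l₂
              (Tr.node a b) a b (dgt_lt c (Tr.node a b)) (by unfold dgt; omega)
            rw [hdec] at hν
            omega
          · intro w hw
            simp only [List.mem_append, List.mem_cons] at hw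
            rcases hw with hw | hw | hw
            · exact hmemdec w (by simp [hw])
            · rw [hw]; exact hwn
            · exact hmemdec w (by simp [hw])
          · have : totW (l₁ ++ Tr.node a b :: l₂) = totW (l₁ ++ a :: b :: l₂) := by
              unfold totW
              simp [List.map_append, List.sum_append, wt]
              omega
            rw [this, ← hdec]
            exact htot
        · push_neg at hwn
          rw [hbig _ hwn, lie_zero, fold_zero]
      unfold foldT at hterm1 hterm2
      rw [hterm1, hterm2, add_zero]

end Main

-- === glue ===
section Glue
variable {k : Type u₁} {L : Type u₂} [Field k] [LieRing L] [LieAlgebra k L] {r : ℕ}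
  (h : Fin r → L)

lemma ev_isword (w : Tr r) : IsLieWord (Set.range h) (ev h w) := by
  induction w with
  | leaf i => exact IsLieWord.base ⟨i, rfl⟩
  | node a b ha hb => exact IsLieWord.bracket ha hb

lemma word_to_tree {a : L} (hw : IsLieWord (Set.range h) a) : ∃ w : Tr r, ev h w = a := by
  induction hw with
  | base hx => obtain ⟨i, rfl⟩ := hx; exact ⟨Tr.leaf i, rfl⟩
  | bracket _ _ iha ihb =>
    obtain ⟨wa, rfl⟩ := iha
    obtain ⟨wb, rfl⟩ := ihb
    exact ⟨Tr.node wa wb, rfl⟩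

variable (K : LieSubalgebra k L)

lemma ev_mem (hK : Set.range h ⊆ K) (w : Tr r) : ev h w ∈ K := by
  induction w with
  | leaf i => exact hK ⟨i, rfl⟩
  | node a b ha hb => exact K.lie_mem ha hb

lemma evK_lcs (hK : Set.range h ⊆ K) (w : Tr r) :
    (⟨ev h w, ev_mem h K hK w⟩ : K) ∈
      LieModule.lowerCentralSeries k K K (wt w - 1) := by
  induction w with
  | leaf i => simp [wt]
  | node a b iha ihb =>
    have key := lcs_bracket (k := k) (A := K) (wt b - 1) (wt a - 1)
      ⟨ev h a, ev_mem h K hK a⟩ ⟨ev h b, ev_mem h K hK b⟩ iha ihb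
    have hbr : (⟨ev h (Tr.node a b), ev_mem h K hK (Tr.node a b)⟩ : K) =
        ⁅(⟨ev h a, ev_mem h K hK a⟩ : K), (⟨ev h b, ev_mem h K hK b⟩ : K)⁆ := by
      ext
      rfl
    rw [hbr]
    have ha1 := one_le_wt a
    have hb1 := one_le_wt b
    have heq : wt a - 1 + (wt b - 1) + 1 = wt (Tr.node a b) - 1 := by
      show _ = wt a + wt b - 1
      omega
    rwa [heq] at key

lemma ev_big_zero (c : ℕ) (hK : Set.range h ⊆ K)
    (hc : LieModule.lowerCentralSeries k K K c = ⊥)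
    (w : Tr r) (hw : c < wt w) : ev h w = 0 := by
  have h1 := evK_lcs h K hK w
  have h2 : LieModule.lowerCentralSeries k K K (wt w - 1) ≤
      LieModule.lowerCentralSeries k K K c :=
    LieModule.antitone_lowerCentralSeries k K K (by omega)
  have h3 := h2 h1
  rw [hc] at h3
  have h4 : (⟨ev h w, ev_mem h K hK w⟩ : K) = 0 := by
    simpa using h3
  exact congrArg Subtype.val h4

/-- The span of all Lie words is a Lie subalgebra. -/
lemma span_words_lie_closed {x y : L}
    (hx : x ∈ Submodule.span k {a : L | IsLieWord (Set.range h) a})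
    (hy : y ∈ Submodule.span k {a : L | IsLieWord (Set.range h) a}) :
    ⁅x, y⁆ ∈ Submodule.span k {a : L | IsLieWord (Set.range h) a} := by
  set W := {a : L | IsLieWord (Set.range h) a}
  refine Submodule.span_induction
    (p := fun x _ => ∀ y ∈ Submodule.span k W, ⁅x, y⁆ ∈ Submodule.span k W)
    ?_ ?_ ?_ ?_ hx y hy
  · intro a ha y hy
    refine Submodule.span_induction
      (p := fun y _ => ⁅a, y⁆ ∈ Submodule.span k W) ?_ ?_ ?_ ?_ hy
    · intro b hb
      exact Submodule.subset_span (IsLieWord.bracket ha hb)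
    · show ⁅a, (0 : L)⁆ ∈ Submodule.span k W
      rw [lie_zero]; exact Submodule.zero_mem _
    · intro u v _ _ hu hv
      show ⁅a, u + v⁆ ∈ Submodule.span k W
      rw [lie_add]; exact Submodule.add_mem _ hu hv
    · intro a' u _ hu
      show ⁅a, a' • u⁆ ∈ Submodule.span k W
      rw [lie_smul]; exact Submodule.smul_mem _ a' hu
  · intro y' hy'
    show ⁅(0 : L), y'⁆ ∈ Submodule.span k W
    rw [zero_lie]; exact Submodule.zero_mem _
  · intro u v hu' hv' hu hv y' hy'
    show ⁅u + v, y'⁆ ∈ Submodule.span k W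
    rw [add_lie]; exact Submodule.add_mem _ (hu y' hy') (hv y' hy')
  · intro a u hu' hu y' hy'
    show ⁅a • u, y'⁆ ∈ Submodule.span k W
    rw [smul_lie]; exact Submodule.smul_mem _ a (hu y' hy')

lemma K_le_span_words (hK : K = LieSubalgebra.lieSpan k L (Set.range h)) :
    ∀ z ∈ K, z ∈ Submodule.span k {a : L | IsLieWord (Set.range h) a} := by
  set W := {a : L | IsLieWord (Set.range h) a}
  let K' : LieSubalgebra k L :=
    { Submodule.span k W with
      lie_mem' := fun hx hy => span_words_lie_closed h hx hy }
  have hle : K ≤ K' := by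
    rw [hK]
    refine LieSubalgebra.lieSpan_le.mpr ?_
    intro a ha
    exact Submodule.subset_span (IsLieWord.base ha)
  exact fun z hz => hle hz

lemma K_le_span_Sval (c : ℕ) (hK : K = LieSubalgebra.lieSpan k L (Set.range h))
    (hc : LieModule.lowerCentralSeries k K K c = ⊥) :
    ∀ z ∈ K, z ∈ Submodule.span k {y : L | ∃ w : Tr r, wt w ≤ c ∧ ev h w = y} := by
  intro z hz
  set Sval := {y : L | ∃ w : Tr r, wt w ≤ c ∧ ev h w = y}
  have h1 := K_le_span_words h K hK z hz
  have hsub : {a : L | IsLieWord (Set.range h) a} ⊆ insert (0 : L) Sval := by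
    intro a ha
    obtain ⟨w, rfl⟩ := word_to_tree h ha
    by_cases hw : wt w ≤ c
    · exact Set.mem_insert_of_mem _ ⟨w, hw, rfl⟩
    · push_neg at hw
      have hrange : Set.range h ⊆ K := by
        rw [hK]; exact LieSubalgebra.subset_lieSpan
      rw [ev_big_zero h K c hrange hc w hw]
      exact Set.mem_insert _ _
  have h2 := Submodule.span_mono hsub h1
  rwa [Submodule.span_insert_zero] at h2

lemma len_le_totW : ∀ l : List (Tr r), l.length ≤ totW l := by
  intro l
  induction l with
  | nil => simp [totW]
  | cons w l ih =>
    have := one_le_wt w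
    simp only [totW, List.map_cons, List.sum_cons, List.length_cons] at *
    omega

lemma expand (c t : ℕ)
    (hnil : ∀ (w : Tr r) (x : L), ((LieAlgebra.ad k L (ev h w)) ^ t) x = 0)
    (hbig : ∀ w : Tr r, c < wt w → ev h w = 0)
    (ht : 1 ≤ t) :
    ∀ (l : List L), (∀ y ∈ l, y ∈ Submodule.span k {y : L | ∃ w : Tr r, wt w ≤ c ∧ ev h w = y}) →
    ∀ (lt : List (Tr r)), (∀ w ∈ lt, wt w ≤ c) →
    c * ((allW r c).length * (t - 1)) + 1 ≤ l.length + lt.length →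
    ∀ x : L, fold l (foldT h lt x) = 0 := by
  intro l
  induction l with
  | nil =>
    intro _ lt hlt hlen x
    have hlenW : lt.length ≤ totW lt := len_le_totW lt
    simp only [List.length_nil, Nat.zero_add] at hlen
    rw [fold_nil]
    exact main_comb c t h hnil hbig ht (nu (dgt r c) (Mnum r c) lt + 1) lt (by omega) hlt
      (by omega) x
  | cons y l ihl =>
    intro hyl lt hlt hlen x
    have hy : y ∈ Submodule.span k {y : L | ∃ w : Tr r, wt w ≤ c ∧ ev h w = y} :=
      hyl y (List.mem_cons_self ..)
    rw [fold_cons]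
    refine Submodule.span_induction
      (p := fun y _ => fold l ⁅foldT h lt x, y⁆ = 0) ?_ ?_ ?_ ?_ hy
    · rintro z ⟨w, hwc, rfl⟩
      have hfw : ⁅foldT h lt x, ev h w⁆ = foldT h (lt ++ [w]) x := by
        rw [foldT_split1]
        rfl
      rw [hfw]
      refine ihl (fun z hz => hyl z (List.mem_cons_of_mem _ hz)) (lt ++ [w]) ?_ ?_ x
      · intro w' hw'
        rcases List.mem_append.mp hw' with hw' | hw'
        · exact hlt w' hw'
        · rw [List.mem_singleton.mp hw']; exact hwc
      · simp only [List.length_append, List.length_singleton, List.length_cons] at hlen ⊢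
        omega
    · show fold l ⁅foldT h lt x, (0 : L)⁆ = 0
      rw [lie_zero, fold_zero]
    · intro u v hu' hv' hu hv
      show fold l ⁅foldT h lt x, u + v⁆ = 0
      rw [lie_add, fold_add, hu, hv, add_zero]
    · intro a u hu' hu
      show fold l ⁅foldT h lt x, a • u⁆ = 0
      rw [lie_smul, fold_smul, hu, smul_zero]

end Glue

end KS

/-- Khukhro–Shumyatsky lemma: for all `c, r, t` there is a bound `u` such
that if `K` is a subalgebra of a Lie algebra `L` generated by `r` elements all of whose
Lie commutators are ad-nilpotent in `L` of index at most `t`, and `K` is nilpotent of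
class at most `c`, then `[L, K, …, K] = 0` with `u` copies of `K`. -/
theorem stmt_16 (c r t : ℕ) :
    ∃ u : ℕ, ∀ (k : Type u₁) (L : Type u₂) [Field k] [LieRing L] [LieAlgebra k L]
      (h : Fin r → L) (K : LieSubalgebra k L),
      K = LieSubalgebra.lieSpan k L (Set.range h) →
      (∀ a : L, IsLieWord (Set.range h) a → ∀ x : L, ((LieAlgebra.ad k L a) ^ t) x = 0) →
      LieModule.lowerCentralSeries k K K c = ⊥ →
      ∀ (x : L) (f : Fin u → L), (∀ i, f i ∈ K) →
        (List.ofFn f).foldl (fun acc y => ⁅acc, y⁆) x = 0 := by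
  refine ⟨c * ((KS.allW r c).length * (t - 1)) + 1, ?_⟩
  intro k L _ _ _ h K hK hadnil hc x f hf
  show KS.fold (List.ofFn f) x = 0
  by_cases hr : r = 0
  · have hemp : Set.range h = ∅ := by
      subst hr
      exact Set.range_eq_empty h
    have hKbot : K ≤ ⊥ := by
      rw [hK, hemp]
      exact LieSubalgebra.lieSpan_le.mpr (by simp)
    have hi : (0 : ℕ) < c * ((KS.allW r c).length * (t - 1)) + 1 := by omega
    have hf0 : f ⟨0, hi⟩ = 0 := by
      have := hKbot (hf ⟨0, hi⟩)
      rwa [LieSubalgebra.mem_bot] at this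
    refine KS.fold_eq_zero_of_zero_mem _ ?_ x
    rw [List.mem_ofFn]
    exact ⟨⟨0, hi⟩, hf0⟩
  · by_cases htz : t = 0
    · have hz : ∀ z : L, z = 0 := by
        intro z
        have := hadnil (h ⟨0, Nat.pos_of_ne_zero hr⟩) (IsLieWord.base ⟨_, rfl⟩) z
        rwa [htz, pow_zero, Module.End.one_apply] at this
      exact hz _
    · have ht : 1 ≤ t := Nat.one_le_iff_ne_zero.mpr htz
      have hrange : Set.range h ⊆ K := by rw [hK]; exact LieSubalgebra.subset_lieSpan
      have hnil : ∀ (w : KS.Tr r) (z : L), ((LieAlgebra.ad k L (KS.ev h w)) ^ t) z = 0 :=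
        fun w z => hadnil (KS.ev h w) (KS.ev_isword h w) z
      have hbig : ∀ w : KS.Tr r, c < KS.wt w → KS.ev h w = 0 :=
        fun w hw => KS.ev_big_zero h K c hrange hc w hw
      have hspan := KS.K_le_span_Sval h K c hK hc
      have hmain := KS.expand h c t hnil hbig ht (List.ofFn f)
        (fun y hy => by
          rw [List.mem_ofFn] at hy
          obtain ⟨i, rfl⟩ := hy
          exact hspan _ (hf i))
        [] (by simp) (by simp) x
      exact hmain
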